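/- Let E₁ : ℝ^d → ℝ be convex and differentiable and E₂ : ℝ^d → ℝ be concave and differentiable. Suppose x, y ∈ ℝ^d satisfy the CCCP stationarity condition ∇E₁(y) = −∇E₂(x). Then the total energy does not increase: E₁(y) + E₂(y) ≤ E₁(x) + E₂(x). -/

import Mathlib

open InnerProductSpace

lemma convex_grad_ineq {F : Type*} [NormedAddCommGroup F] [InnerProductSpace ℝ F] [CompleteSpace F]
    {f : F → ℝ} (hconv : ConvexOn ℝ Set.univ f) (hdiff : Differentiable ℝ f)
    (p q : F) : f p + inner ℝ (gradient f p) (q - p) ≤ f q := by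
  rcases eq_or_ne q p with rfl | hne
  · simp
  set v := q - p with hv
  have hline : ∀ t : ℝ, HasDerivAt (fun s : ℝ => p + s • v) v t := by
    intro t
    simpa using ((hasDerivAt_id t).smul_const v).const_add p
  set g : ℝ → ℝ := fun t => f (p + t • v) with hg
  have hgconv : ConvexOn ℝ Set.univ g := by
    have := hconv.comp_affineMap (AffineMap.lineMap p q : ℝ →ᵃ[ℝ] F)
    have hc : g = f ∘ (AffineMap.lineMap p q : ℝ →ᵃ[ℝ] F) := by
      ext t
      simp [hg, AffineMap.lineMap_apply, hv, add_comm]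
    rw [hc]; exact this.subset (Set.subset_univ _) convex_univ
  have hgderiv : ∀ t : ℝ, HasDerivAt g (inner ℝ (gradient f (p + t • v)) v) t := by
    intro t
    have hgrad : HasGradientAt f (gradient f (p + t • v)) (p + t • v) :=
      (hdiff _).hasGradientAt
    have hfd : HasFDerivAt f ((toDual ℝ F) (gradient f (p + t • v))) (p + t • v) := hgrad
    have := hfd.comp_hasDerivAt t (hline t)
    simp at this ⊢; exact this
  have hslope := hgconv.le_slope_of_hasDerivAt (Set.mem_univ (0:ℝ))
    (Set.mem_univ (1:ℝ)) one_pos (hgderiv 0)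
  have hg0 : g 0 = f p := by simp [hg]
  have hg1 : g 1 = f q := by simp [hg, hv]
  simp only [zero_smul, add_zero] at hslope
  have hs : slope g 0 1 = f q - f p := by
    rw [slope_def_field, hg0, hg1]; ring
  rw [hs] at hslope
  linarith

lemma gradient_neg' {F : Type*} [NormedAddCommGroup F] [InnerProductSpace ℝ F]
    [CompleteSpace F] (f : F → ℝ) (x : F) : gradient (-f) x = -gradient f x := by
  have : (-f : F → ℝ) = fun y => -f y := rfl
  rw [gradient, gradient, this, fderiv_fun_neg, map_neg]

theorem cccp_one_step_descent
    (d : ℕ) (E₁ E₂ : EuclideanSpace ℝ (Fin d) → ℝ)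
    (h₁conv : ConvexOn ℝ Set.univ E₁) (h₁diff : Differentiable ℝ E₁)
    (h₂conc : ConcaveOn ℝ Set.univ E₂) (h₂diff : Differentiable ℝ E₂)
    (x y : EuclideanSpace ℝ (Fin d))
    (hstat : gradient E₁ y = -gradient E₂ x) :
    E₁ y + E₂ y ≤ E₁ x + E₂ x := by
  have h1 := convex_grad_ineq h₁conv h₁diff y x
  have h2 := convex_grad_ineq h₂conc.neg h₂diff.neg x y
  simp only [Pi.neg_apply, gradient_neg' E₂ x] at h2
  rw [hstat] at h1
  have e1 : (inner ℝ (-gradient E₂ x) (x - y) : ℝ) = - inner ℝ (gradient E₂ x) (x - y) := by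
    rw [inner_neg_left]
  have e2 : (inner ℝ (-gradient E₂ x) (y - x) : ℝ) = inner ℝ (gradient E₂ x) (x - y) := by
    rw [inner_neg_left, ← inner_neg_right]; congr 1; abel
  rw [e1] at h1
  rw [e2] at h2
  linarith
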